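/- Let A be a self-adjoint operator bounded below on a Hilbert space X with κ = min σ(A) < 0, let T > 0, and let B: U → X be bounded with operator norm ‖B‖. If the control system ẇ + Aw = Bu is null-controllable in time T with control cost C_T, then C_T² ≥ ‖B‖^{−2} · 2κ / (e^{2κT} − 1), and in particular C_T² ≥ ‖B‖^{−2} · (1/(2T) − κ). -/

import Mathlib

open MeasureTheory

set_option maxHeartbeats 1000000

/- Let A be self-adjoint, bounded below, with κ = min σ(A) < 0, T > 0, B : U → X bounded.
   If the control system ẇ + Aw = Bu is null-controllable in time T with control cost
   C_T (equivalently, the observability inequality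
   ‖e^{−AT}φ‖² ≤ C_T² ∫₀^T ‖B* e^{−At}φ‖² dt holds for all φ ∈ X), then
   C_T² ≥ ‖B‖⁻²·2κ/(e^{2κT} − 1), and in particular C_T² ≥ ‖B‖⁻²·(1/(2T) − κ).
   The semigroup S t = e^{−At} is encoded via the spectral measures μ φ of the vectors
   φ (so ‖φ‖² = μ φ(ℝ) and ‖S t φ‖² = ∫ e^{−2λt} dμ φ(λ)); κ = min σ(A) means every
   μ φ is supported in [κ,∞) and for each ε > 0 some φ ≠ 0 has μ φ supported in
   (−∞, κ+ε]. -/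
lemma aux_exp_ineq (x : ℝ) (hx : x < 0) : 2 * x ≤ (1 - x) * (Real.exp x - 1) := by
  have h1 := Real.add_one_le_exp x
  have h2 := Real.exp_pos x
  rcases le_or_gt (-1) x with h | h
  · nlinarith
  · nlinarith

lemma aux_int_exp (c T : ℝ) (hc : c ≠ 0) :
    ∫ t in (0:ℝ)..T, Real.exp (c * t) = (Real.exp (c * T) - 1) / c := by
  have h : ∀ t ∈ Set.uIcc (0:ℝ) T, HasDerivAt (fun s => Real.exp (c * s) / c)
      (Real.exp (c * t)) t := by
    intro t _
    have h1 : HasDerivAt (fun s : ℝ => c * s) c t := by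
      simpa using (hasDerivAt_id t).const_mul c
    have := (h1.exp).div_const c
    exact this.congr_deriv (mul_div_cancel_right₀ _ hc)
  rw [intervalIntegral.integral_eq_sub_of_hasDerivAt h]
  · field_simp; simp
  · exact (Real.continuous_exp.comp (continuous_const.mul continuous_id)).intervalIntegrable _ _

theorem stmt_15 {X U : Type*}
    [NormedAddCommGroup X] [InnerProductSpace ℝ X] [CompleteSpace X]
    [NormedAddCommGroup U] [InnerProductSpace ℝ U] [CompleteSpace U]
    (κ T CT : ℝ) (hκ : κ < 0) (hT : 0 < T) (hCT : 0 ≤ CT)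
    (B : U →L[ℝ] X)
    (S : ℝ → X →L[ℝ] X)
    (μ : X → Measure ℝ)
    (hfin : ∀ φ : X, IsFiniteMeasure (μ φ))
    (hnorm : ∀ φ : X, ‖φ‖ ^ 2 = ((μ φ) Set.univ).toReal)
    (hheat : ∀ φ : X, ∀ t : ℝ, ‖S t φ‖ ^ 2 = ∫ l, Real.exp (-2 * l * t) ∂(μ φ))
    (hlow : ∀ φ : X, ∀ᵐ l ∂(μ φ), κ ≤ l)
    (hmin : ∀ ε > (0 : ℝ), ∃ φ : X, φ ≠ 0 ∧ ∀ᵐ l ∂(μ φ), l ≤ κ + ε)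
    (hobs : ∀ φ : X, ‖S T φ‖ ^ 2 ≤ CT ^ 2 * ∫ t in (0 : ℝ)..T, ‖B.adjoint (S t φ)‖ ^ 2) :
    CT ^ 2 ≥ ‖B‖⁻¹ ^ 2 * (2 * κ / (Real.exp (2 * κ * T) - 1)) ∧
    CT ^ 2 ≥ ‖B‖⁻¹ ^ 2 * (1 / (2 * T) - κ) := by
  have h2κ : 2 * κ < 0 := by linarith
  have h2κ' : (-2 * κ) ≠ 0 := by linarith
  set I : ℝ := ∫ t in (0:ℝ)..T, Real.exp (-2 * κ * t) with hIdef
  have hIval : I = (Real.exp (-2 * κ * T) - 1) / (-2 * κ) := aux_int_exp _ _ h2κ'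
  have hexpT : 1 < Real.exp (-2 * κ * T) := by
    rw [show (1:ℝ) = Real.exp 0 by simp]
    exact Real.exp_lt_exp.mpr (by nlinarith)
  have hIpos : 0 < I := by
    rw [hIval]; apply div_pos <;> nlinarith
  -- key estimate for each ε
  have key : ∀ ε > (0:ℝ), Real.exp (-2 * (κ + ε) * T) ≤ CT ^ 2 * ‖B‖ ^ 2 * I := by
    intro ε hε
    obtain ⟨φ, hφ0, hsup⟩ := hmin ε hε
    haveI := hfin φ
    set m : ℝ := ((μ φ) Set.univ).toReal with hm
    have hμT : 0 < m := by
      have h1 := hnorm φ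
      have h2 : 0 < ‖φ‖ := norm_pos_iff.mpr hφ0
      nlinarith
    have hIntμ : ∀ t : ℝ, 0 ≤ t → Integrable (fun l => Real.exp (-2 * l * t)) (μ φ) := by
      intro t ht
      refine Integrable.mono' (integrable_const (Real.exp (-2 * κ * t))) ?_ ?_
      · exact (Real.continuous_exp.comp (by continuity)).aestronglyMeasurable
      · filter_upwards [hlow φ] with l hl
        rw [Real.norm_eq_abs, abs_of_nonneg (Real.exp_pos _).le]
        exact Real.exp_le_exp.mpr (by nlinarith)
    have h1 : Real.exp (-2 * (κ + ε) * T) * m ≤ ‖S T φ‖ ^ 2 := by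
      rw [hheat φ T]
      have hc : ∫ (_ : ℝ), Real.exp (-2 * (κ + ε) * T) ∂(μ φ)
          = Real.exp (-2 * (κ + ε) * T) * m := by
        rw [integral_const]; simp [hm, mul_comm]; rfl
      rw [← hc]
      refine integral_mono_ae (integrable_const _) (hIntμ T hT.le) ?_
      filter_upwards [hsup] with l hl
      exact Real.exp_le_exp.mpr (by nlinarith)
    have h2 : ∀ t ∈ Set.Icc (0:ℝ) T,
        ‖B.adjoint (S t φ)‖ ^ 2 ≤ ‖B‖ ^ 2 * m * Real.exp (-2 * κ * t) := by
      intro t ht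
      have hb : ‖B.adjoint (S t φ)‖ ≤ ‖B‖ * ‖S t φ‖ := by
        have := (B.adjoint).le_opNorm (S t φ)
        rwa [ContinuousLinearMap.adjoint.norm_map B] at this
      have hS : ‖S t φ‖ ^ 2 ≤ Real.exp (-2 * κ * t) * m := by
        rw [hheat φ t]
        have hc : ∫ (_ : ℝ), Real.exp (-2 * κ * t) ∂(μ φ)
            = Real.exp (-2 * κ * t) * m := by
          rw [integral_const]; simp [hm, mul_comm]; rfl
        rw [← hc]
        refine integral_mono_ae (hIntμ t ht.1) (integrable_const _) ?_
        filter_upwards [hlow φ] with l hl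
        exact Real.exp_le_exp.mpr (by nlinarith [ht.1])
      nlinarith [norm_nonneg (B.adjoint (S t φ)), norm_nonneg (S t φ), norm_nonneg B,
        mul_le_mul hb hb (norm_nonneg _) (by positivity)]
    have h3 : ∫ t in (0:ℝ)..T, ‖B.adjoint (S t φ)‖ ^ 2 ≤ ‖B‖ ^ 2 * m * I := by
      by_cases hint : IntervalIntegrable (fun t => ‖B.adjoint (S t φ)‖ ^ 2) volume 0 T
      · have hgint : IntervalIntegrable (fun t => ‖B‖ ^ 2 * m * Real.exp (-2 * κ * t))
            volume 0 T := by
          exact (Continuous.intervalIntegrable (by continuity) _ _)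
        calc ∫ t in (0:ℝ)..T, ‖B.adjoint (S t φ)‖ ^ 2
            ≤ ∫ t in (0:ℝ)..T, ‖B‖ ^ 2 * m * Real.exp (-2 * κ * t) :=
              intervalIntegral.integral_mono_on hT.le hint hgint h2
          _ = ‖B‖ ^ 2 * m * I := by
              rw [hIdef, ← intervalIntegral.integral_const_mul]
      · rw [intervalIntegral.integral_undef hint]
        positivity
    have h4 := hobs φ
    have h5 : Real.exp (-2 * (κ + ε) * T) * m ≤ CT ^ 2 * ‖B‖ ^ 2 * I * m := by
      calc Real.exp (-2 * (κ + ε) * T) * m ≤ ‖S T φ‖ ^ 2 := h1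
        _ ≤ CT ^ 2 * ∫ t in (0:ℝ)..T, ‖B.adjoint (S t φ)‖ ^ 2 := h4
        _ ≤ CT ^ 2 * (‖B‖ ^ 2 * m * I) := by
            exact mul_le_mul_of_nonneg_left h3 (by positivity)
        _ = CT ^ 2 * ‖B‖ ^ 2 * I * m := by ring
    exact le_of_mul_le_mul_right h5 hμT
  -- take limit ε → 0⁺
  have hkey0 : Real.exp (-2 * κ * T) ≤ CT ^ 2 * ‖B‖ ^ 2 * I := by
    have hcont : Continuous fun ε : ℝ => Real.exp (-2 * (κ + ε) * T) := by continuity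
    have htend : Filter.Tendsto (fun ε : ℝ => Real.exp (-2 * (κ + ε) * T))
        (nhdsWithin 0 (Set.Ioi 0)) (nhds (Real.exp (-2 * κ * T))) := by
      have h0 := hcont.tendsto 0
      simp only [add_zero] at h0
      exact h0.mono_left nhdsWithin_le_nhds
    refine le_of_tendsto htend ?_
    filter_upwards [self_mem_nhdsWithin] with ε hε using key ε hε
  -- B has positive norm
  have hB2 : 0 < ‖B‖ ^ 2 := by
    rcases lt_or_eq_of_le (norm_nonneg B) with h | h
    · positivity
    · exfalso
      rw [← h] at hkey0
      nlinarith [Real.exp_pos (-2 * κ * T)]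
  -- identity exp(-2κT) * exp(2κT) = 1
  have hEe : Real.exp (-2 * κ * T) * Real.exp (2 * κ * T) = 1 := by
    rw [← Real.exp_add]; ring_nf; exact Real.exp_zero
  have hE1 : Real.exp (2 * κ * T) - 1 < 0 := by
    nlinarith [Real.exp_pos (2 * κ * T)]
  -- main polynomial inequality
  have h5 : CT ^ 2 * ‖B‖ ^ 2 * (Real.exp (2 * κ * T) - 1) ≤ 2 * κ := by
    rw [hIval] at hkey0
    have hkey' : Real.exp (-2 * κ * T) * (-2 * κ)
        ≤ CT ^ 2 * ‖B‖ ^ 2 * (Real.exp (-2 * κ * T) - 1) := by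
      rw [← mul_div_assoc] at hkey0
      exact (le_div_iff₀ (by linarith : (0:ℝ) < -2 * κ)).mp hkey0
    have hmul := mul_le_mul_of_nonneg_right hkey' (Real.exp_pos (2 * κ * T)).le
    have e1 : Real.exp (-2 * κ * T) * (-2 * κ) * Real.exp (2 * κ * T) = -2 * κ := by
      linear_combination (-2 * κ) * hEe
    have e2 : CT ^ 2 * ‖B‖ ^ 2 * (Real.exp (-2 * κ * T) - 1) * Real.exp (2 * κ * T)
        = CT ^ 2 * ‖B‖ ^ 2 * (1 - Real.exp (2 * κ * T)) := by
      linear_combination (CT ^ 2 * ‖B‖ ^ 2) * hEe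
    rw [e1, e2] at hmul
    nlinarith [hmul]
  have goal1 : CT ^ 2 ≥ ‖B‖⁻¹ ^ 2 * (2 * κ / (Real.exp (2 * κ * T) - 1)) := by
    have hden : (Real.exp (2 * κ * T) - 1) * ‖B‖ ^ 2 < 0 :=
      mul_neg_of_neg_of_pos hE1 hB2
    have heq : ‖B‖⁻¹ ^ 2 * (2 * κ / (Real.exp (2 * κ * T) - 1))
        = 2 * κ / ((Real.exp (2 * κ * T) - 1) * ‖B‖ ^ 2) := by
      rw [inv_pow]
      field_simp
    rw [ge_iff_le, heq, div_le_iff_of_neg hden]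
    nlinarith [h5]
  refine ⟨goal1, ?_⟩
  -- second inequality
  have h7 : 1 / (2 * T) - κ ≤ 2 * κ / (Real.exp (2 * κ * T) - 1) := by
    have hx : 2 * κ * T < 0 := mul_neg_of_neg_of_pos h2κ hT
    have haux := aux_exp_ineq (2 * κ * T) hx
    have heq2 : 1 / (2 * T) - κ = (1 - 2 * κ * T) / (2 * T) := by
      field_simp
    rw [heq2, le_div_iff_of_neg hE1, div_mul_eq_mul_div, le_div_iff₀ (by linarith : (0:ℝ) < 2 * T)]
    nlinarith [haux]
  calc ‖B‖⁻¹ ^ 2 * (1 / (2 * T) - κ)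
      ≤ ‖B‖⁻¹ ^ 2 * (2 * κ / (Real.exp (2 * κ * T) - 1)) :=
        mul_le_mul_of_nonneg_left h7 (by positivity)
    _ ≤ CT ^ 2 := goal1
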